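/- Given integers x_1, ..., x_k with k ≥ 3 and g = gcd(x_1, ..., x_k), there exists N ∈ ℕ such that for all n ∈ ℕ, there is a finite sequence of indices i_1, ..., i_J (each in {1,...,k}) with i_j ≠ i_{j+1} for all j, such that the sum x_{i_1} + x_{i_2} + ... + x_{i_J} equals N + n·g. -/

import Mathlib

section
variable {k : ℕ}

/-- rotated full period -/
private def per (s : Fin k) : List (Fin k) := (List.finRange k).map (fun i => s + i)

private lemma per_chain' (hk : 3 ≤ k) (s : Fin k) : (per s).Chain' (· ≠ ·) := by
  haveI : NeZero k := ⟨by omega⟩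
  rw [per, List.Chain', List.isChain_map]
  refine ((List.pairwise_lt_finRange k).imp ?_).isChain
  intro a b hab h
  exact absurd (add_left_cancel h) hab.ne

private lemma per_head? (hk : 3 ≤ k) (s : Fin k) : (per s).head? = some s := by
  haveI : NeZero k := ⟨by omega⟩
  rw [per, List.head?_map, List.head?_eq_getElem?]
  rw [List.getElem?_eq_getElem (by simp; omega)]
  simp [List.getElem_finRange]

private lemma per_getLast? (hk : 3 ≤ k) (s : Fin k) :
    (per s).getLast? = some (s + ⟨k - 1, by omega⟩) := by
  haveI : NeZero k := ⟨by omega⟩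
  rw [per, List.getLast?_map, List.getLast?_eq_getElem?]
  rw [List.getElem?_eq_getElem (by simp; omega)]
  simp [List.getElem_finRange]

private lemma per_sum (hk : 3 ≤ k) (x : Fin k → ℕ) (s : Fin k) :
    ((per s).map x).sum = ∑ i, x i := by
  haveI : NeZero k := ⟨by omega⟩
  rw [per, List.map_map]
  rw [show ∑ i, x i = ∑ i, x (s + i) from
    (Fintype.sum_equiv (Equiv.addLeft s) _ _ (fun i => rfl)).symm]
  rw [Fin.sum_univ_def]
  rfl

end

section
variable {k : ℕ} [NeZero k]

private lemma fulls (hk : 3 ≤ k) (x : Fin k → ℕ) :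
    ∀ m : ℕ, ∃ l : List (Fin k), l.Chain' (· ≠ ·) ∧
      (l.map x).sum = m * (∑ i, x i) ∧ ∀ a ∈ l.head?, a = (0 : Fin k) := by
  intro m
  induction m with
  | zero => exact ⟨[], by simp [List.Chain', List.isChain_nil]⟩
  | succ m ih =>
    obtain ⟨l, hc, hs, hh⟩ := ih
    refine ⟨per 0 ++ l, ?_, ?_, ?_⟩
    · rw [List.Chain', List.isChain_append]
      refine ⟨per_chain' hk 0, hc, ?_⟩
      intro a ha b hb
      rw [per_getLast? hk 0] at ha
      simp at ha
      rw [hh b hb, ← ha]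
      simp [Fin.ext_iff, Fin.add_def, Fin.val_zero]
      omega
    · rw [List.map_append, List.sum_append, per_sum hk, hs]; ring
    · intro a ha
      rw [List.head?_append_of_ne_nil _ (by simp [per]; omega), per_head? hk] at ha
      simp at ha
      simp [ha]

private lemma main_lemma (hk : 3 ≤ k) (x : Fin k → ℕ) :
    ∀ (D : List (Fin k)) (m : ℕ), ∃ l : List (Fin k), l.Chain' (· ≠ ·) ∧
      (l.map x).sum = (D.map x).sum + (D.length + m) * (∑ i, x i) ∧
      ∀ a ∈ l.head?, a = D.headD 0 := by
  intro D
  induction D with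
  | nil =>
    intro m
    obtain ⟨l, hc, hs, hh⟩ := fulls hk x m
    exact ⟨l, hc, by simpa using hs, hh⟩
  | cons j D ih =>
    intro m
    obtain ⟨l, hc, hs, hh⟩ := ih m
    set c : Fin k := ⟨k - 1, by omega⟩ with hcdef
    set h : Fin k := D.headD 0 with hhdef
    set d1 : Fin k := ⟨1, by omega⟩ with hd1
    set d2 : Fin k := ⟨2, by omega⟩ with hd2
    have hd1ne : d1 ≠ 0 := by simp [hd1, Fin.ext_iff]
    have hd2ne : d2 ≠ 0 := by simp [hd2, Fin.ext_iff]
    have hd12 : d1 ≠ d2 := by simp [hd1, hd2, Fin.ext_iff]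
    set s : Fin k := if j + d1 = h - c then j + d2 else j + d1 with hsdef
    have hsj : s ≠ j := by
      rw [hsdef]
      split
      · exact fun hh2 => hd2ne (add_eq_left.mp hh2)
      · exact fun hh2 => hd1ne (add_eq_left.mp hh2)
    have hshc : s ≠ h - c := by
      rw [hsdef]
      split
      · rename_i heq
        rw [← heq]
        intro hh2
        exact hd12 (add_left_cancel hh2).symm
      · assumption
    have hsc : s + c ≠ h := by
      intro hh2
      exact hshc (eq_sub_of_add_eq hh2)
    refine ⟨j :: (per s ++ l), ?_, ?_, ?_⟩
    · rw [List.Chain', List.isChain_cons]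
      constructor
      · intro y hy
        rw [List.head?_append_of_ne_nil _ (by simp [per]; omega), per_head? hk] at hy
        simp at hy
        rw [← hy]
        exact fun he => hsj he.symm
      · rw [List.isChain_append]
        refine ⟨per_chain' hk s, hc, ?_⟩
        intro a ha b hb
        rw [per_getLast? hk s] at ha
        simp at ha
        rw [hh b hb, ← ha]
        exact hsc
    · simp only [List.map_cons, List.sum_cons, List.map_append, List.sum_append,
        per_sum hk, hs, List.length_cons]
      ring
    · intro a ha
      simp at ha
      simp [ha]
end

private lemma bezout {k : ℕ} (x : Fin k → ℕ) (s : Finset (Fin k)) :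
    ∃ a : Fin k → ℤ, ((s.gcd x : ℕ) : ℤ) = ∑ i ∈ s, a i * x i := by
  classical
  induction s using Finset.induction_on with
  | empty => exact ⟨0, by simp⟩
  | @insert i s hi ih =>
    obtain ⟨a, ha⟩ := ih
    set u := Nat.gcdA (x i) (s.gcd x) with hu
    set v := Nat.gcdB (x i) (s.gcd x) with hv
    refine ⟨fun j => if j = i then u else a j * v, ?_⟩
    rw [Finset.gcd_insert, Finset.sum_insert hi]
    simp only [eq_self_iff_true, if_true]
    have h1 : ((gcd (x i) (s.gcd x) : ℕ) : ℤ) = x i * u + (s.gcd x) * v := by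
      rw [show (gcd (x i) (s.gcd x)) = Nat.gcd (x i) (s.gcd x) from rfl]
      exact Nat.gcd_eq_gcd_ab _ _
    rw [h1, ha, Finset.sum_mul]
    have h2 : ∑ j ∈ s, a j * (x j : ℤ) * v
        = ∑ j ∈ s, (if j = i then u else a j * v) * x j := by
      refine Finset.sum_congr rfl fun j hj => ?_
      rw [if_neg (ne_of_mem_of_not_mem hj hi)]
      ring
    rw [h2]
    ring

private lemma replist {k : ℕ} (x : Fin k → ℕ) (c : Fin k → ℕ) :
    ∃ D : List (Fin k), D.length = ∑ i, c i ∧ (D.map x).sum = ∑ i, c i * x i := by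
  have h : ∀ L : List (Fin k), ∃ D : List (Fin k),
      D.length = (L.map c).sum ∧ (D.map x).sum = (L.map (fun i => c i * x i)).sum := by
    intro L
    induction L with
    | nil => exact ⟨[], by simp⟩
    | cons i L ih =>
      obtain ⟨D, h1, h2⟩ := ih
      refine ⟨List.replicate (c i) i ++ D, ?_, ?_⟩
      · simp [h1]
      · simp [List.map_replicate, List.sum_replicate, h2, smul_eq_mul]
  obtain ⟨D, h1, h2⟩ := h (List.finRange k)
  exact ⟨D, by rw [h1, ← Fin.sum_univ_def], by rw [h2, ← Fin.sum_univ_def]⟩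

/-- stability of admissible (no-consecutive-repeat) sums. -/
theorem stmt0 (k : ℕ) (hk : 3 ≤ k) (x : Fin k → ℕ) (hx : ∀ i, 0 < x i) :
    ∃ N : ℕ, ∀ n : ℕ, ∃ l : List (Fin k), l.Chain' (· ≠ ·) ∧
      (l.map x).sum = N + n * Finset.univ.gcd x := by
  haveI : NeZero k := ⟨by omega⟩
  set g := Finset.univ.gcd x with hg
  set S := ∑ i, x i with hS
  have hi0 : (⟨0, by omega⟩ : Fin k) ∈ (Finset.univ : Finset (Fin k)) := Finset.mem_univ _
  have hgpos : 0 < g := by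
    rcases Nat.eq_zero_or_pos g with h | h
    · exact absurd (Finset.gcd_eq_zero_iff.mp h _ hi0) (hx _).ne'
    · exact h
  have hgS : g ∣ S := Finset.dvd_sum (fun i _ => Finset.gcd_dvd (Finset.mem_univ i))
  have hSpos : 0 < S := Finset.sum_pos (fun i _ => hx i) ⟨_, hi0⟩
  set e := S / g with he
  have heS : e * g = S := Nat.div_mul_cancel hgS
  have hepos : 0 < e := Nat.div_pos (Nat.le_of_dvd hSpos hgS) hgpos
  obtain ⟨a, ha⟩ := bezout x Finset.univ
  set A := Finset.univ.sup (fun i => (a i).natAbs) with hA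
  set b : Fin k → ℕ := fun i => (a i + A).toNat with hb
  have hbi : ∀ i, (b i : ℤ) = a i + A := by
    intro i
    have h2 : (a i).natAbs ≤ A := Finset.le_sup (f := fun i => (a i).natAbs) (Finset.mem_univ i)
    have h3 : -(A : ℤ) ≤ a i := by
      have := neg_abs_le (a i)
      rw [Int.abs_eq_natAbs] at this
      have h4 : ((a i).natAbs : ℤ) ≤ (A : ℤ) := by exact_mod_cast h2
      linarith
    rw [hb]
    simp only []
    rw [Int.toNat_of_nonneg (by linarith)]
  set B := ∑ i, b i with hB
  have hkey : ∑ i, b i * x i = g + A * S := by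
    have hz : ((∑ i, b i * x i : ℕ) : ℤ) = (g : ℤ) + A * S := by
      push_cast
      calc ∑ i, (b i : ℤ) * x i = ∑ i, (a i + A) * x i := by
            refine Finset.sum_congr rfl fun i _ => by rw [hbi i]
        _ = ∑ i, a i * x i + (A : ℤ) * ∑ i, (x i : ℤ) := by
            rw [Finset.mul_sum, ← Finset.sum_add_distrib]
            refine Finset.sum_congr rfl fun i _ => by ring
        _ = (g : ℤ) + A * S := by
            rw [← ha, hg, hS]
            push_cast
            ring
    exact_mod_cast hz
  refine ⟨e * (A + B) * S, ?_⟩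
  intro n
  set q := n / e with hq
  set r := n % e with hrr
  have hr : r < e := Nat.mod_lt _ hepos
  obtain ⟨D, hD1, hD2⟩ := replist x (fun i => r * b i)
  have hDlen : D.length = r * B := by rw [hD1, hB, Finset.mul_sum]
  have hDsum : (D.map x).sum = r * g + r * A * S := by
    rw [hD2]
    calc ∑ i, r * b i * x i = r * ∑ i, b i * x i := by
          rw [Finset.mul_sum]; exact Finset.sum_congr rfl fun i _ => by ring
      _ = r * g + r * A * S := by rw [hkey]; ring
  have hmle : r * A + r * B ≤ e * (A + B) + q := by
    calc r * A + r * B = r * (A + B) := by ring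
      _ ≤ e * (A + B) := Nat.mul_le_mul_right _ hr.le
      _ ≤ e * (A + B) + q := Nat.le_add_right _ _
  set m := e * (A + B) + q - (r * A + r * B) with hm
  have hm2 : r * A + r * B + m = e * (A + B) + q := by
    rw [hm]
    exact Nat.add_sub_cancel' hmle
  obtain ⟨l, hc, hs, _⟩ := main_lemma hk x D m
  refine ⟨l, hc, ?_⟩
  rw [hs, hDsum, hDlen, ← hS]
  have hng : n * g = q * S + r * g := by
    conv_lhs => rw [← Nat.div_add_mod n e, ← hq, ← hrr]
    rw [← heS]
    ring
  rw [hng]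
  calc r * g + r * A * S + (r * B + m) * S
      = (r * A + r * B + m) * S + r * g := by ring
    _ = (e * (A + B) + q) * S + r * g := by rw [hm2]
    _ = e * (A + B) * S + (q * S + r * g) := by ring
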